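/- Let n ≥ 3 and let W° = {±1}°^n ⋊ S_n be the group of coordinate permutations of ℝ^n combined with an even number of sign changes. Let c' = (1/2, …, 1/2, −1/2) and let W°_{c'} be its stabilizer in W°. Then every W°_{c'}-invariant polynomial function on ℝ^n lies in the ℝ-subalgebra generated by the W°-invariant polynomial functions f together with their translates v ↦ f(v + c'). -/

import Mathlib

open scoped RealInnerProductSpace

/-- The signed permutation `(ε, σ)` acting on `ℝ^n`: `x ↦ (ε i * x (σ i))_i`. -/
noncomputable def sgnPerm {n : ℕ} (ε : Fin n → ℝ) (σ : Equiv.Perm (Fin n))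
    (x : EuclideanSpace ℝ (Fin n)) : EuclideanSpace ℝ (Fin n) :=
  (WithLp.toLp 2 (fun i => ε i * x (σ i)) : EuclideanSpace ℝ (Fin n))

/-- A polynomial function on a real vector space `M`: an element of the `ℝ`-subalgebra of
`M → ℝ` generated by the linear functionals. -/
def IsPolyFun {M : Type*} [AddCommGroup M] [Module ℝ M] (f : M → ℝ) : Prop :=
  f ∈ Algebra.adjoin ℝ {g : M → ℝ | ∃ l : M →ₗ[ℝ] ℝ, g = ⇑l}

/-- Invariance of `f : ℝ^n → ℝ` under the group `W = {±1}^n ⋊ S_n` of all signed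
permutations of the coordinates. -/
def IsWInv {n : ℕ} (f : EuclideanSpace ℝ (Fin n) → ℝ) : Prop :=
  ∀ (ε : Fin n → ℝ), (∀ i, ε i = 1 ∨ ε i = -1) → ∀ σ : Equiv.Perm (Fin n),
    ∀ x, f (sgnPerm ε σ x) = f x

/-- Invariance of `f : ℝ^n → ℝ` under the group `W° = {±1}°^n ⋊ S_n` of signed
permutations with an even number of sign changes (`∏ ε i = 1`). -/
def IsW0Inv {n : ℕ} (f : EuclideanSpace ℝ (Fin n) → ℝ) : Prop :=
  ∀ (ε : Fin n → ℝ), (∀ i, ε i = 1 ∨ ε i = -1) → (∏ i, ε i = 1) →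
    ∀ σ : Equiv.Perm (Fin n), ∀ x, f (sgnPerm ε σ x) = f x

open MvPolynomial

noncomputable section Aux

variable {n : ℕ}

/-- Evaluation of multivariate polynomials as functions on `ℝ^n`. -/
def Ev (n : ℕ) : MvPolynomial (Fin n) ℝ →ₐ[ℝ] (EuclideanSpace ℝ (Fin n) → ℝ) :=
  aeval (fun i => (fun x => x i : EuclideanSpace ℝ (Fin n) → ℝ))

lemma Ev_apply (P : MvPolynomial (Fin n) ℝ) (x : EuclideanSpace ℝ (Fin n)) :
    Ev n P x = eval (fun i => x i) P := by
  induction P using MvPolynomial.induction_on with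
  | C a => simp [Ev]
  | add p q hp hq => simp only [map_add, Pi.add_apply, hp, hq]
  | mul_X p i hp =>
      rw [map_mul, eval_mul, eval_X]
      show Ev n p x * Ev n (X i) x = _
      rw [hp]
      congr 1
      simp [Ev]

lemma Ev_injective : Function.Injective (Ev n) := by
  intro P Q h
  apply MvPolynomial.funext
  intro x
  have := congrFun h ((WithLp.equiv 2 (Fin n → ℝ)).symm x)
  rwa [Ev_apply, Ev_apply] at this

lemma isPolyFun_iff (f : EuclideanSpace ℝ (Fin n) → ℝ) :
    IsPolyFun f ↔ ∃ P : MvPolynomial (Fin n) ℝ, f = Ev n P := by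
  constructor
  · intro hf
    have hle : Algebra.adjoin ℝ {g : EuclideanSpace ℝ (Fin n) → ℝ | ∃ l : EuclideanSpace ℝ (Fin n) →ₗ[ℝ] ℝ, g = ⇑l}
        ≤ (Ev n).range := by
      rw [Algebra.adjoin_le_iff]
      rintro g ⟨l, rfl⟩
      rw [SetLike.mem_coe, AlgHom.mem_range]
      refine ⟨∑ i, MvPolynomial.C (l (EuclideanSpace.single i 1)) * X i, funext fun x => ?_⟩
      rw [Ev_apply]
      simp only [map_sum, eval_mul, eval_C, eval_X]
      have hx : x = ∑ i, x i • EuclideanSpace.single i (1:ℝ) := by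
        apply PiLp.ext; intro j
        classical
        have : (∑ i, x i • EuclideanSpace.single i (1:ℝ)) j
            = ∑ i, (x i • EuclideanSpace.single i (1:ℝ)) j := by
          rw [WithLp.ofLp_sum]; exact Finset.sum_apply j Finset.univ _
        rw [this]
        simp [EuclideanSpace.single_apply]
      have hl : l x = ∑ i, x i * l (EuclideanSpace.single i 1) := by
        conv_lhs => rw [hx]
        rw [map_sum]
        simp [smul_eq_mul]
      rw [hl]
      exact Finset.sum_congr rfl fun i _ => mul_comm _ _
    obtain ⟨P, hP⟩ := hle hf
    exact ⟨P, hP.symm⟩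
  · rintro ⟨P, rfl⟩
    have : (Ev n).range ≤ Algebra.adjoin ℝ {g : EuclideanSpace ℝ (Fin n) → ℝ | ∃ l : EuclideanSpace ℝ (Fin n) →ₗ[ℝ] ℝ, g = ⇑l} := by
      rw [Ev, ← Algebra.adjoin_range_eq_range_aeval]
      apply Algebra.adjoin_mono
      rintro g ⟨i, rfl⟩
      refine ⟨PiLp.projₗ 2 (fun _ => ℝ) i, ?_⟩
      funext x
      rfl
    exact this ⟨P, rfl⟩


/-- The sign vector `(1,…,1,-1)`. -/
def sg (n : ℕ) (i : Fin n) : ℝ := if (i:ℕ)+1 = n then -1 else 1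

lemma sg_cases (i : Fin n) : sg n i = 1 ∨ sg n i = -1 := by
  unfold sg; split <;> simp

lemma sg_sq (i : Fin n) : sg n i * sg n i = 1 := by
  rcases sg_cases i with h | h <;> rw [h] <;> ring

lemma sg_pow_even {m : ℕ} (hm : Even m) (i : Fin n) : sg n i ^ m = 1 := by
  rcases sg_cases i with h | h <;> rw [h]
  · exact one_pow m
  · exact hm.neg_one_pow

lemma sg_pow_sub {N j : ℕ} (hN : Even N) (hj : j ≤ N) (i : Fin n) :
    sg n i ^ (N - j) = sg n i ^ j := by
  rcases sg_cases i with h | h <;> rw [h]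
  · simp
  · have h1 : ((-1:ℝ)) ^ (N - j) * (-1) ^ j = 1 := by
      rw [← pow_add, Nat.sub_add_cancel hj]; exact hN.neg_one_pow
    have h2 : ((-1:ℝ)) ^ j * (-1) ^ j = 1 := by
      rw [← pow_add]; exact (Even.add_self j).neg_one_pow
    calc ((-1:ℝ)) ^ (N-j) = (-1)^(N-j) * ((-1)^j * (-1)^j) := by rw [h2, mul_one]
      _ = ((-1)^(N-j) * (-1)^j) * (-1)^j := by ring
      _ = (-1)^j := by rw [h1, one_mul]

/-- The diagonal involution `x ↦ (sg i * x i)`. -/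
def Dm {n : ℕ} (x : EuclideanSpace ℝ (Fin n)) : EuclideanSpace ℝ (Fin n) :=
  (WithLp.toLp 2 (fun i => sg n i * x i) : EuclideanSpace ℝ (Fin n))

lemma Dm_apply (x : EuclideanSpace ℝ (Fin n)) (i : Fin n) : Dm x i = sg n i * x i := rfl

lemma Dm_Dm (x : EuclideanSpace ℝ (Fin n)) : Dm (Dm x) = x := by
  apply PiLp.ext; intro i
  show sg n i * (sg n i * x i) = x i
  rw [← mul_assoc, sg_sq, one_mul]

/-- Precomposition with `Dm` as an algebra endomorphism of the function algebra. -/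
def Phi (n : ℕ) : (EuclideanSpace ℝ (Fin n) → ℝ) →ₐ[ℝ] (EuclideanSpace ℝ (Fin n) → ℝ) where
  toFun g := fun x => g (Dm x)
  map_one' := rfl
  map_mul' _ _ := rfl
  map_zero' := rfl
  map_add' _ _ := rfl
  commutes' _ := rfl

lemma Phi_apply (g : EuclideanSpace ℝ (Fin n) → ℝ) (x : EuclideanSpace ℝ (Fin n)) :
    Phi n g x = g (Dm x) := rfl

lemma Phi_Phi (g : EuclideanSpace ℝ (Fin n) → ℝ) : Phi n (Phi n g) = g := by
  funext x
  rw [Phi_apply, Phi_apply, Dm_Dm]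

lemma Ev_psum (m : ℕ) (x : EuclideanSpace ℝ (Fin n)) :
    Ev n (psum (Fin n) ℝ m) x = ∑ i, x i ^ m := by
  rw [Ev_apply]
  simp [psum]

lemma psum_isPolyFun (m : ℕ) : IsPolyFun (Ev n (psum (Fin n) ℝ m)) :=
  (isPolyFun_iff _).mpr ⟨_, rfl⟩

lemma psum_isWInv {m : ℕ} (hm : Even m) : IsW0Inv (Ev n (psum (Fin n) ℝ m)) := by
  intro ε hε _ σ x
  rw [Ev_psum, Ev_psum]
  have : ∀ i, (sgnPerm ε σ x) i ^ m = x (σ i) ^ m := by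
    intro i
    show (ε i * x (σ i)) ^ m = _
    rw [mul_pow]
    rcases hε i with h | h <;> rw [h]
    · rw [one_pow, one_mul]
    · rw [hm.neg_one_pow, one_mul]
  rw [Finset.sum_congr rfl fun i _ => this i]
  exact Equiv.sum_comp σ (fun j => x j ^ m)

lemma Phi_psum_even {m : ℕ} (hm : Even m) :
    Phi n (Ev n (psum (Fin n) ℝ m)) = Ev n (psum (Fin n) ℝ m) := by
  funext x
  rw [Phi_apply, Ev_psum, Ev_psum]
  refine Finset.sum_congr rfl fun i _ => ?_
  rw [Dm_apply, mul_pow, sg_pow_even hm, one_mul]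


/-- The target generating set. -/
def TargetSet (n : ℕ) (c' : EuclideanSpace ℝ (Fin n)) : Set (EuclideanSpace ℝ (Fin n) → ℝ) :=
  {g : EuclideanSpace ℝ (Fin n) → ℝ | IsPolyFun g ∧ IsW0Inv g} ∪
  {g : EuclideanSpace ℝ (Fin n) → ℝ | ∃ h : EuclideanSpace ℝ (Fin n) → ℝ,
      (IsPolyFun h ∧ IsW0Inv h) ∧ g = fun v => h (v + c')}

lemma translate_psum_expand {n : ℕ} (c' : EuclideanSpace ℝ (Fin n))
    (hc' : ∀ i, c' i = sg n i * (1/2)) {k : ℕ} (hk : Even k) :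
    (fun v : EuclideanSpace ℝ (Fin n) => Ev n (psum (Fin n) ℝ k) (v + c'))
      = ∑ j ∈ Finset.range (k+1),
          ((k.choose j : ℝ) * (1/2)^(k-j)) • Phi n (Ev n (psum (Fin n) ℝ j)) := by
  funext x
  have hR : (∑ j ∈ Finset.range (k+1),
        ((k.choose j : ℝ) * (1/2)^(k-j)) • Phi n (Ev n (psum (Fin n) ℝ j))) x
      = ∑ j ∈ Finset.range (k+1),
        ((k.choose j : ℝ) * (1/2)^(k-j)) * (∑ i, (sg n i * x i) ^ j) := by
    rw [Finset.sum_apply]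
    refine Finset.sum_congr rfl fun j _ => ?_
    rw [Pi.smul_apply, Phi_apply, Ev_psum, smul_eq_mul]
    simp only [Dm_apply]
  rw [hR, Ev_psum]
  have hL : ∀ i : Fin n, ((x + c') i) ^ k
      = ∑ j ∈ Finset.range (k+1), (sg n i * x i)^j * ((1/2:ℝ)^(k-j) * (k.choose j : ℝ)) := by
    intro i
    have hxc : (x + c') i = x i + sg n i * (1/2) := by
      rw [PiLp.add_apply, hc']
    rw [hxc, add_pow]
    refine Finset.sum_congr rfl fun j hj => ?_
    have hjk : j ≤ k := Nat.lt_succ_iff.mp (Finset.mem_range.mp hj)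
    rw [mul_pow (sg n i) ((1:ℝ)/2), sg_pow_sub hk hjk, mul_pow (sg n i) (x i)]
    ring
  rw [Finset.sum_congr rfl fun i _ => hL i, Finset.sum_comm]
  refine Finset.sum_congr rfl fun j _ => ?_
  rw [← Finset.sum_mul]
  ring

lemma Pd_mem {n : ℕ} (c' : EuclideanSpace ℝ (Fin n))
    (hc' : ∀ i, c' i = sg n i * (1/2)) (m : ℕ) :
    Phi n (Ev n (psum (Fin n) ℝ m)) ∈ Algebra.adjoin ℝ (TargetSet n c') := by
  induction m using Nat.strong_induction_on with
  | _ m IH =>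
  rcases Nat.even_or_odd m with he | ho
  · rw [Phi_psum_even he]
    exact Algebra.subset_adjoin (Or.inl ⟨psum_isPolyFun m, psum_isWInv he⟩)
  · have hev : Even (m+1) := Odd.add_one ho
    have hg : (fun v => Ev n (psum (Fin n) ℝ (m+1)) (v + c'))
        ∈ Algebra.adjoin ℝ (TargetSet n c') :=
      Algebra.subset_adjoin (Or.inr ⟨_, ⟨psum_isPolyFun _, psum_isWInv hev⟩, rfl⟩)
    have hm_mem : m ∈ Finset.range (m+1+1) := by
      rw [Finset.mem_range]; omega
    have hc0 : (((m+1).choose m : ℝ) * ((1:ℝ)/2)^(m+1-m)) = ((m:ℝ)+1)/2 := by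
      rw [Nat.choose_succ_self_right]
      have : m+1-m = 1 := by omega
      rw [this]
      push_cast
      ring
    have hne : ((m:ℝ)+1)/2 ≠ 0 := by positivity
    have hPd : Phi n (Ev n (psum (Fin n) ℝ m))
        = (((m:ℝ)+1)/2)⁻¹ • ((fun v => Ev n (psum (Fin n) ℝ (m+1)) (v + c'))
            - ∑ j ∈ (Finset.range (m+1+1)).erase m,
                (((m+1).choose j : ℝ) * ((1:ℝ)/2)^(m+1-j)) • Phi n (Ev n (psum (Fin n) ℝ j))) := by
      rw [translate_psum_expand c' hc' hev, ← Finset.add_sum_erase _ _ hm_mem, hc0,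
        add_sub_cancel_right, smul_smul, inv_mul_cancel₀ hne, one_smul]
    rw [hPd]
    refine Subalgebra.smul_mem _ (Subalgebra.sub_mem _ hg (sum_mem fun j hj => ?_)) _
    obtain ⟨hjne, hjr⟩ := Finset.mem_erase.mp hj
    refine Subalgebra.smul_mem _ ?_ _
    rcases Nat.even_or_odd j with hje | hjo
    · rw [Phi_psum_even hje]
      exact Algebra.subset_adjoin (Or.inl ⟨psum_isPolyFun j, psum_isWInv hje⟩)
    · have hjlt : j < m := by
        have hjle : j ≤ m+1 := Nat.lt_succ_iff.mp (Finset.mem_range.mp hjr)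
        rcases Nat.lt_or_ge j m with h | h
        · exact h
        · exfalso
          have hje : j = m+1 := by omega
          subst hje
          exact (Nat.not_odd_iff_even.mpr hev) hjo
      exact IH j hjlt

lemma Ed_mem {n : ℕ} (c' : EuclideanSpace ℝ (Fin n))
    (hc' : ∀ i, c' i = sg n i * (1/2)) (k : ℕ) :
    Phi n (Ev n (esymm (Fin n) ℝ k)) ∈ Algebra.adjoin ℝ (TargetSet n c') := by
  induction k using Nat.strong_induction_on with
  | _ k IH =>
  rcases Nat.eq_zero_or_pos k with rfl | hk
  · rw [esymm_zero, map_one, map_one]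
    exact Subalgebra.one_mem _
  · have hN := congrArg (fun Q => Phi n (Ev n Q)) (MvPolynomial.mul_esymm_eq_sum (Fin n) ℝ k)
    simp only [map_mul, map_sum, map_pow, map_neg, map_one, map_natCast] at hN
    have hkR : ((k:ℝ)) ≠ 0 := Nat.cast_ne_zero.mpr hk.ne'
    have hsm : ((k : ℕ) : EuclideanSpace ℝ (Fin n) → ℝ) * Phi n (Ev n (esymm (Fin n) ℝ k))
        = (k:ℝ) • Phi n (Ev n (esymm (Fin n) ℝ k)) := by
      rw [Algebra.smul_def, map_natCast]
    have hEd : Phi n (Ev n (esymm (Fin n) ℝ k))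
        = (k:ℝ)⁻¹ • (((k : ℕ) : EuclideanSpace ℝ (Fin n) → ℝ) * Phi n (Ev n (esymm (Fin n) ℝ k))) := by
      rw [hsm, smul_smul, inv_mul_cancel₀ hkR, one_smul]
    rw [hEd, hN]
    refine Subalgebra.smul_mem _ (Subalgebra.mul_mem _ ?_ (sum_mem fun a ha => ?_)) _
    · exact Subalgebra.pow_mem _ (Subalgebra.neg_mem _ (Subalgebra.one_mem _)) _
    · have halt : a.1 < k := (Finset.mem_filter.mp ha).2
      exact Subalgebra.mul_mem _
        (Subalgebra.mul_mem _
          (Subalgebra.pow_mem _ (Subalgebra.neg_mem _ (Subalgebra.one_mem _)) _)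
          (IH a.1 halt))
        (Pd_mem c' hc' a.2)

lemma Phi_Ev {n : ℕ} (Q : MvPolynomial (Fin n) ℝ) :
    Phi n (Ev n Q)
      = Ev n (aeval (fun i => MvPolynomial.C (sg n i) * X i) Q) := by
  have h : ((Phi n).comp (Ev n))
      = (Ev n).comp (aeval (fun i => MvPolynomial.C (sg n i) * X i)) := by
    apply MvPolynomial.algHom_ext
    intro i
    funext x
    simp only [AlgHom.comp_apply, aeval_X]
    rw [Phi_apply, Ev_apply, Ev_apply]
    simp [Dm_apply]
  exact congrFun (congrArg DFunLike.coe h) Q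

end Aux

theorem Dn_stabilizer_of_c'_invariants_generated
    (n : ℕ) (hn : 3 ≤ n)
    (c' : EuclideanSpace ℝ (Fin n))
    (hc' : ∀ i : Fin n, c' i = if (i : ℕ) + 1 = n then -(1 : ℝ) / 2 else (1 : ℝ) / 2)
    (f : EuclideanSpace ℝ (Fin n) → ℝ) (hf : IsPolyFun f)
    -- `f` is invariant under the stabilizer `W°_{c'}` of `c'` in `W°`
    (hinv : ∀ (ε : Fin n → ℝ), (∀ i, ε i = 1 ∨ ε i = -1) → (∏ i, ε i = 1) →
      ∀ σ : Equiv.Perm (Fin n), sgnPerm ε σ c' = c' → ∀ x, f (sgnPerm ε σ x) = f x) :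
    f ∈ Algebra.adjoin ℝ
      ({g : EuclideanSpace ℝ (Fin n) → ℝ | IsPolyFun g ∧ IsW0Inv g} ∪
       {g : EuclideanSpace ℝ (Fin n) → ℝ | ∃ h : EuclideanSpace ℝ (Fin n) → ℝ,
          (IsPolyFun h ∧ IsW0Inv h) ∧ g = fun v => h (v + c')}) := by
  have hc2 : ∀ i, c' i = sg n i * (1/2) := by
    intro i
    rw [hc']
    unfold sg
    split <;> norm_num
  obtain ⟨P, rfl⟩ := (isPolyFun_iff f).mp hf
  show Ev n P ∈ Algebra.adjoin ℝ (TargetSet n c')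
  set P' : MvPolynomial (Fin n) ℝ :=
    aeval (fun i => MvPolynomial.C (sg n i) * X i) P with hP'def
  have hsym : MvPolynomial.IsSymmetric P' := by
    intro σ
    apply Ev_injective
    funext x
    set xσ : EuclideanSpace ℝ (Fin n) := (WithLp.toLp 2 (fun i => x (σ i)) : EuclideanSpace ℝ (Fin n)) with hxσ
    have h1 : Ev n (MvPolynomial.rename σ P') x = Ev n P' xσ := by
      rw [Ev_apply, MvPolynomial.eval_rename, Ev_apply]
      rfl
    rw [h1]
    have h2 : Ev n P' = Phi n (Ev n P) := (Phi_Ev P).symm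
    rw [h2, Phi_apply, Phi_apply]
    set ε : Fin n → ℝ := fun i => sg n i * sg n (σ i) with hε
    have hε1 : ∀ i, ε i = 1 ∨ ε i = -1 := by
      intro i
      rcases sg_cases i with h | h <;> rcases sg_cases (σ i) with h' | h' <;>
        simp [hε, h, h']
    have hεp : ∏ i, ε i = 1 := by
      calc ∏ i, ε i = (∏ i, sg n i) * (∏ i, sg n (σ i)) := Finset.prod_mul_distrib
        _ = (∏ i, sg n i) * (∏ i, sg n i) := by rw [Equiv.prod_comp σ (sg n)]
        _ = ∏ i, (sg n i * sg n i) := Finset.prod_mul_distrib.symm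
        _ = 1 := by rw [Finset.prod_congr rfl fun i _ => sg_sq i, Finset.prod_const_one]
    have hfix : sgnPerm ε σ c' = c' := by
      apply PiLp.ext; intro i
      show ε i * c' (σ i) = c' i
      rw [hc2, hc2]
      calc ε i * (sg n (σ i) * (1/2)) = sg n i * (sg n (σ i) * sg n (σ i)) * (1/2) := by
            rw [hε]; ring
        _ = sg n i * (1/2) := by rw [sg_sq, mul_one]
    have hDx : sgnPerm ε σ (Dm x) = Dm xσ := by
      apply PiLp.ext; intro i
      show ε i * (Dm x) (σ i) = Dm xσ i
      rw [Dm_apply, Dm_apply]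
      calc ε i * (sg n (σ i) * x (σ i))
          = sg n i * (sg n (σ i) * sg n (σ i)) * x (σ i) := by rw [hε]; ring
        _ = sg n i * xσ i := by rw [sg_sq, mul_one]
    rw [← hDx]
    exact hinv ε hε1 hεp σ hfix (Dm x)
  have hcard : Fintype.card (Fin n) ≤ n := by simp
  obtain ⟨Q, hQ⟩ := MvPolynomial.esymmAlgHom_surjective (R := ℝ) hcard
    ⟨P', (MvPolynomial.mem_symmetricSubalgebra P').mpr hsym⟩
  have hPQ : P' = aeval (fun i : Fin n => esymm (Fin n) ℝ ((i:ℕ)+1)) Q := by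
    have h := congrArg Subtype.val hQ
    rw [MvPolynomial.esymmAlgHom_apply] at h
    exact h.symm
  have hfP : Ev n P = Phi n (Ev n P') := by
    rw [← Phi_Phi (Ev n P), Phi_Ev P, ← hP'def]
  have hcomp : Phi n (Ev n ((aeval fun i : Fin n => esymm (Fin n) ℝ ((i:ℕ)+1)) Q))
      = (aeval fun i : Fin n => Phi n (Ev n (esymm (Fin n) ℝ ((i:ℕ)+1)))) Q :=
    MvPolynomial.comp_aeval_apply (f := fun i : Fin n => esymm (Fin n) ℝ ((i:ℕ)+1)) ((Phi n).comp (Ev n)) Q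
  rw [hfP, hPQ, hcomp]
  have hrange : (aeval fun i : Fin n => Phi n (Ev n (esymm (Fin n) ℝ ((i:ℕ)+1)))) Q
      ∈ Algebra.adjoin ℝ
        (Set.range fun i : Fin n => Phi n (Ev n (esymm (Fin n) ℝ ((i:ℕ)+1)))) := by
    rw [Algebra.adjoin_range_eq_range_aeval]
    exact ⟨Q, rfl⟩
  refine Algebra.adjoin_le ?_ hrange
  rintro _ ⟨i, rfl⟩
  exact Ed_mem c' hc2 _
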